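/- arXiv:0807.0604 — 3 statements merged into one kernel-verified Lean document; each statement's English description precedes it below -/
import Mathlib

section
/- For any multi-index j = (j₁,…,jₙ) of positive natural numbers, |j|^{|j|} / (j₁^{j₁}·…·jₙ^{jₙ}) ≤ n^{|j|}, where |j| = j₁ + … + jₙ. -/
theorem multiindex_power_bound (n : ℕ) (j : Fin n → ℕ) (hj : ∀ k, 0 < j k) :
    (∑ k, j k) ^ (∑ k, j k) ≤ n ^ (∑ k, j k) * ∏ k, (j k) ^ (j k) := by
  rcases Nat.eq_zero_or_pos n with hn | hn
  · subst hn; simp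
  -- Work over ℝ
  set Sn : ℕ := ∑ k, j k with hSn
  have hSnpos : 0 < Sn := by
    have : (0:ℕ) < ∑ k, j k := Finset.sum_pos (fun k _ => hj k) ⟨⟨0, hn⟩, Finset.mem_univ _⟩
    simpa [hSn] using this
  have key : ((Sn : ℝ)) ^ Sn ≤ (n : ℝ) ^ Sn * ∏ k, ((j k : ℝ)) ^ (j k) := by
    set S : ℝ := (Sn : ℝ) with hS
    have hSpos : (0:ℝ) < S := by rw [hS]; exact_mod_cast hSnpos
    have hjpos : ∀ k, (0:ℝ) < (j k : ℝ) := fun k => by exact_mod_cast hj k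
    have hnpos : (0:ℝ) < (n : ℝ) := by exact_mod_cast hn
    -- weights and values
    set w : Fin n → ℝ := fun k => (j k : ℝ) / S with hw
    set z : Fin n → ℝ := fun k => S / ((n : ℝ) * (j k : ℝ)) with hz
    have hwnn : ∀ i ∈ Finset.univ, (0:ℝ) ≤ w i :=
      fun i _ => div_nonneg (hjpos i).le hSpos.le
    have hwsum : ∑ i : Fin n, w i = 1 := by
      rw [← Finset.sum_div]
      have : (∑ i : Fin n, (j i : ℝ)) = S := by
        rw [hS, hSn]; push_cast; ring
      rw [this, div_self hSpos.ne']
    have hznn : ∀ i ∈ Finset.univ, (0:ℝ) ≤ z i :=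
      fun i _ => div_nonneg hSpos.le (mul_nonneg hnpos.le (hjpos i).le)
    have amgm := Real.geom_mean_le_arith_mean_weighted Finset.univ w z hwnn hwsum hznn
    have hsum1 : ∑ i : Fin n, w i * z i = 1 := by
      have : ∀ i : Fin n, w i * z i = 1 / (n : ℝ) := by
        intro i
        have h1 : (j i : ℝ) ≠ 0 := (hjpos i).ne'
        have h2 : (n : ℝ) ≠ 0 := hnpos.ne'
        have h3 : S ≠ 0 := hSpos.ne'
        rw [hw, hz]
        field_simp
      rw [Finset.sum_congr rfl (fun i _ => this i)]
      simp [Finset.card_univ]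
      field_simp
    rw [hsum1] at amgm
    -- raise to the power S
    have hP : (0:ℝ) ≤ ∏ i : Fin n, z i ^ w i :=
      Finset.prod_nonneg fun i _ => Real.rpow_nonneg (hznn i (Finset.mem_univ i)) _
    have hpow : (∏ i : Fin n, z i ^ w i) ^ (S : ℝ) ≤ 1 :=
      Real.rpow_le_one hP amgm hSpos.le
    have heq : (∏ i : Fin n, z i ^ w i) ^ (S : ℝ) = ∏ i : Fin n, z i ^ (j i) := by
      rw [← Real.finset_prod_rpow _ _ (fun i _ => Real.rpow_nonneg (hznn i (Finset.mem_univ i)) _)]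
      refine Finset.prod_congr rfl fun i _ => ?_
      rw [← Real.rpow_natCast (z i) (j i), ← Real.rpow_mul (hznn i (Finset.mem_univ i))]
      congr 1
      rw [hw]
      field_simp
    rw [heq] at hpow
    have hzprod : ∏ i : Fin n, z i ^ (j i)
        = S ^ Sn / ((n:ℝ) ^ Sn * ∏ k, ((j k : ℝ)) ^ (j k)) := by
      simp only [hz, div_pow]
      rw [Finset.prod_div_distrib, Finset.prod_pow_eq_pow_sum, ← hSn]
      congr 1
      simp only [mul_pow]
      rw [Finset.prod_mul_distrib, Finset.prod_pow_eq_pow_sum, ← hSn]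
    rw [hzprod, div_le_one (mul_pos (pow_pos hnpos _) (Finset.prod_pos fun i _ => pow_pos (hjpos i) _))] at hpow
    simpa using hpow
  have := key
  have final : ((Sn ^ Sn : ℕ) : ℝ) ≤ ((n ^ Sn * ∏ k, (j k) ^ (j k) : ℕ) : ℝ) := by
    push_cast
    exact this
  exact_mod_cast final
end

section
/- If {αⱼ}_{j∈ℕᵐ} is a family of independent standard real Gaussian random variables and ε > 0, then the event {|αⱼ| < (1+ε)^{|j|} for all j} has strictly positive probability. -/
open MeasureTheory ProbabilityTheory Real
open scoped ENNReal NNReal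


private lemma aux_summable_pow' (m : ℕ) {r : ℝ} (h0 : 0 ≤ r) (h1 : r < 1) :
    Summable (fun j : Fin m → ℕ => r ^ (∑ k, j k)) := by
  induction m with
  | zero => exact Summable.of_finite
  | succ n ih =>
    have key : Summable (fun x : ℕ × (Fin n → ℕ) =>
        r ^ x.1 * r ^ (∑ k, x.2 k)) :=
      Summable.mul_of_nonneg (f := fun a : ℕ => r ^ a)
        (g := fun p : Fin n → ℕ => r ^ (∑ k, p k))
        (summable_geometric_of_lt_one h0 h1) ih
        (fun _ => pow_nonneg h0 _) (fun _ => pow_nonneg h0 _)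
    refine ((Fin.consEquiv fun _ => ℕ).summable_iff).mp ?_
    have heq : (fun j : Fin (n+1) → ℕ => r ^ (∑ k, j k)) ∘ (Fin.consEquiv fun _ => ℕ)
        = fun x : ℕ × (Fin n → ℕ) => r ^ x.1 * r ^ (∑ k, x.2 k) := by
      funext x
      simp [Fin.consEquiv, Fin.sum_cons, pow_add]
    rw [heq]
    exact key

private lemma aux_gauss_pos' {c : ℝ} (hc : 0 < c) : 0 < gaussianReal 0 1 (Set.Ioo (-c) c) := by
  rw [pos_iff_ne_zero]
  intro h
  have h0 : volume (Set.Ioo (-c) c) = 0 := gaussianReal_absolutelyContinuous' 0 one_ne_zero h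
  rw [Real.volume_Ioo] at h0
  have h1 : (0:ℝ) < c - -c := by linarith
  rw [ENNReal.ofReal_eq_zero] at h0
  linarith

private lemma aux_pdf_eq (x : ℝ) :
    gaussianPDFReal 0 1 x = (Real.sqrt (2 * π))⁻¹ * Real.exp (-x ^ 2 / 2) := by
  rw [gaussianPDFReal]
  norm_num

private lemma aux_gauss_tail' {c : ℝ} (hc : 1 ≤ c) :
    gaussianReal 0 1 {x : ℝ | c ≤ |x|} ≤ ENNReal.ofReal (2 * Real.exp 1 * Real.exp (-c)) := by
  have hset : {x : ℝ | c ≤ |x|} = Set.Iic (-c) ∪ Set.Ici c := by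
    ext x
    simp only [Set.mem_setOf_eq, le_abs, Set.mem_union, Set.mem_Iic, Set.mem_Ici]
    constructor
    · rintro (h | h)
      · right; exact h
      · left; linarith
    · rintro (h | h)
      · right; linarith
      · left; exact h
  rw [hset, gaussianReal_apply_eq_integral 0 one_ne_zero]
  refine ENNReal.ofReal_le_ofReal ?_
  set B : ℝ → ℝ := fun x => Real.exp 1 * Real.exp (-|x|) with hB
  have hpdf : ∀ x : ℝ, gaussianPDFReal 0 1 x ≤ B x := by
    intro x
    rw [aux_pdf_eq]
    have h1 : (Real.sqrt (2 * π))⁻¹ ≤ 1 := by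
      rw [inv_le_one_iff₀]
      right
      refine Real.one_le_sqrt.mpr ?_
      nlinarith [Real.pi_gt_three]
    have h2 : Real.exp (-x ^ 2 / 2) ≤ B x := by
      show Real.exp (-x ^ 2 / 2) ≤ Real.exp 1 * Real.exp (-|x|)
      rw [← Real.exp_add]
      refine Real.exp_le_exp.mpr ?_
      nlinarith [sq_nonneg (|x| - 1), sq_abs x, abs_nonneg x]
    have h3 : (Real.sqrt (2 * π))⁻¹ * Real.exp (-x ^ 2 / 2) ≤ Real.exp (-x ^ 2 / 2) :=
      mul_le_of_le_one_left (Real.exp_pos _).le h1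
    linarith
  have hcneg : -c < 0 := by linarith
  have hIb1 : IntegrableOn B (Set.Iic (-c)) := by
    refine IntegrableOn.congr_fun ((integrableOn_exp_Iic (-c)).const_mul (Real.exp 1)) ?_
      measurableSet_Iic
    intro x hx
    have hxabs : |x| = -x := abs_of_neg (lt_of_le_of_lt hx hcneg)
    simp [hB, hxabs]
  have hIb2 : IntegrableOn B (Set.Ici c) := by
    rw [integrableOn_Ici_iff_integrableOn_Ioi]
    refine IntegrableOn.congr_fun ((exp_neg_integrableOn_Ioi c one_pos).const_mul (Real.exp 1)) ?_
      measurableSet_Ioi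
    intro x hx
    have hxabs : |x| = x := abs_of_pos (lt_trans (by linarith) hx)
    simp [hB, hxabs]
  have hdisj : Disjoint (Set.Iic (-c)) (Set.Ici c) := Set.Iic_disjoint_Ici.mpr (by linarith)
  have hmeas : MeasurableSet (Set.Iic (-c) ∪ Set.Ici c) :=
    measurableSet_Iic.union measurableSet_Ici
  calc ∫ x in Set.Iic (-c) ∪ Set.Ici c, gaussianPDFReal 0 1 x
      ≤ ∫ x in Set.Iic (-c) ∪ Set.Ici c, B x :=
        setIntegral_mono_on ((integrable_gaussianPDFReal 0 1).integrableOn)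
          (hIb1.union hIb2) hmeas (fun x _ => hpdf x)
    _ = (∫ x in Set.Iic (-c), B x) + ∫ x in Set.Ici c, B x :=
        setIntegral_union hdisj measurableSet_Ici hIb1 hIb2
    _ = 2 * Real.exp 1 * Real.exp (-c) := by
        have e1 : (∫ x in Set.Iic (-c), B x) = Real.exp 1 * Real.exp (-c) := by
          rw [show (∫ x in Set.Iic (-c), B x) = ∫ x in Set.Iic (-c), Real.exp 1 * Real.exp x from
            setIntegral_congr_fun measurableSet_Iic (by
              intro x hx
              have hxabs : |x| = -x := abs_of_neg (lt_of_le_of_lt hx hcneg)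
              simp [hB, hxabs])]
          rw [integral_const_mul, integral_exp_Iic]
        have e2 : (∫ x in Set.Ici c, B x) = Real.exp 1 * Real.exp (-c) := by
          rw [MeasureTheory.integral_Ici_eq_integral_Ioi]
          rw [show (∫ x in Set.Ioi c, B x) = ∫ x in Set.Ioi c, Real.exp 1 * Real.exp (-x) from
            setIntegral_congr_fun measurableSet_Ioi (by
              intro x hx
              have hxabs : |x| = x := abs_of_pos (lt_trans (by linarith) hx)
              simp [hB, hxabs])]
          rw [integral_const_mul, integral_exp_neg_Ioi]
        rw [e1, e2]; ring

theorem gaussian_family_polynomial_bound_event_pos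
    {m : ℕ} {Ω : Type*} [MeasurableSpace Ω] (μ : Measure Ω) [IsProbabilityMeasure μ]
    (α : (Fin m → ℕ) → Ω → ℝ)
    (hindep : iIndepFun α μ)
    (hgauss : ∀ j, Measure.map (α j) μ = gaussianReal 0 1)
    (ε : ℝ) (hε : 0 < ε) :
    0 < μ {ω | ∀ j : Fin m → ℕ, |α j ω| < (1 + ε) ^ (∑ k, j k)} := by
  classical
  set c : (Fin m → ℕ) → ℝ := fun j => (1 + ε) ^ (∑ k, j k) with hcdef
  have hc1 : ∀ j, 1 ≤ c j := fun j => one_le_pow₀ (by linarith)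
  have hc0 : ∀ j, 0 < c j := fun j => lt_of_lt_of_le one_pos (hc1 j)
  -- almost everywhere measurability and measurable modifications
  have haem : ∀ j, AEMeasurable (α j) μ := by
    intro j
    by_contra h
    have h0 := Measure.map_of_not_aemeasurable h
    have h1 := hgauss j
    rw [h0] at h1
    have h2 : (gaussianReal 0 1 : Measure ℝ) Set.univ = 1 := measure_univ
    rw [← h1] at h2
    simp at h2
  set β : (Fin m → ℕ) → Ω → ℝ := fun j => (haem j).mk (α j) with hβdef
  have hβmeas : ∀ j, Measurable (β j) := fun j => (haem j).measurable_mk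
  have hae : ∀ j, α j =ᵐ[μ] β j := fun j => (haem j).ae_eq_mk
  have hall : ∀ᵐ ω ∂μ, ∀ j, α j ω = β j ω := ae_all_iff.2 hae
  have hgaussβ : ∀ j, Measure.map (β j) μ = gaussianReal 0 1 := fun j => by
    rw [← Measure.map_congr (hae j)]; exact hgauss j
  -- independence of the modifications
  have hindepβ : iIndepFun β μ := by
    rw [iIndepFun_iff_measure_inter_preimage_eq_mul] at hindep ⊢
    intro S sets hsets
    have h1 : (⋂ i ∈ S, α i ⁻¹' sets i) =ᵐ[μ] (⋂ i ∈ S, β i ⁻¹' sets i) := by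
      rw [Filter.eventuallyEq_set]
      filter_upwards [hall] with ω hω
      simp only [Set.mem_iInter, Set.mem_preimage]
      constructor
      · intro h j hj; rw [← hω j]; exact h j hj
      · intro h j hj; rw [hω j]; exact h j hj
    have h2 : ∀ i ∈ S, μ (β i ⁻¹' sets i) = μ (α i ⁻¹' sets i) := by
      intro i _
      refine measure_congr ?_
      rw [Filter.eventuallyEq_set]
      filter_upwards [hae i] with ω hω
      simp [Set.mem_preimage, hω]
    rw [← measure_congr h1, hindep S hsets]
    exact (Finset.prod_congr rfl h2).symm
  -- the events
  set E : (Fin m → ℕ) → Set Ω := fun j => β j ⁻¹' (Set.Ioo (-c j) (c j)) with hEdef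
  have hEmeas : ∀ j, MeasurableSet (E j) := fun j => (hβmeas j) measurableSet_Ioo
  have hEcomap : ∀ j, MeasurableSet[MeasurableSpace.comap (β j) inferInstance] (E j) :=
    fun j => ⟨Set.Ioo (-c j) (c j), measurableSet_Ioo, rfl⟩
  have hEμ : ∀ j, μ (E j) = gaussianReal 0 1 (Set.Ioo (-c j) (c j)) := fun j => by
    rw [hEdef]
    show μ (β j ⁻¹' Set.Ioo (-c j) (c j)) = _
    rw [← Measure.map_apply (hβmeas j) measurableSet_Ioo, hgaussβ j]
  -- tail bound on complements
  set ρ : ℝ := Real.exp (-ε) with hρdef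
  have hρ0 : 0 ≤ ρ := (Real.exp_pos _).le
  have hρ1 : ρ < 1 := Real.exp_lt_one_iff.mpr (by linarith)
  have hexp1 : (1:ℝ) ≤ Real.exp 1 := by
    rw [Real.one_le_exp_iff]; norm_num
  have hEcμ : ∀ j, μ (E j)ᶜ ≤ ENNReal.ofReal (2 * Real.exp 1 * ρ ^ (∑ k, j k)) := by
    intro j
    have hcompl : (Set.Ioo (-c j) (c j))ᶜ = {x : ℝ | c j ≤ |x|} := by
      ext x
      simp only [Set.mem_compl_iff, Set.mem_Ioo, Set.mem_setOf_eq, not_and_or, not_lt, le_abs]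
      constructor
      · rintro (h | h)
        · right; linarith
        · left; exact h
      · rintro (h | h)
        · right; exact h
        · left; linarith
    have h1 : μ (E j)ᶜ = gaussianReal 0 1 {x : ℝ | c j ≤ |x|} := by
      rw [hEdef]
      show μ ((β j ⁻¹' Set.Ioo (-c j) (c j))ᶜ) = _
      rw [← Set.preimage_compl, ← Measure.map_apply (hβmeas j) (measurableSet_Ioo.compl),
        hgaussβ j, hcompl]
    rw [h1]
    refine le_trans (aux_gauss_tail' (hc1 j)) (ENNReal.ofReal_le_ofReal ?_)
    have hb : 1 + (∑ k, j k : ℝ) * ε ≤ c j := by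
      rw [hcdef]
      exact_mod_cast one_add_mul_le_pow (by linarith : (-2:ℝ) ≤ ε) (∑ k, j k)
    have hkey : Real.exp 1 * Real.exp (-c j) ≤ ρ ^ (∑ k, j k) := by
      rw [← Real.exp_add, hρdef, ← Real.exp_nat_mul]
      refine Real.exp_le_exp.mpr ?_
      push_cast
      nlinarith
    nlinarith [Real.exp_pos (-c j), pow_nonneg hρ0 (∑ k, j k)]
  -- summable majorant and choice of the finite set
  set F : (Fin m → ℕ) → ℝ≥0∞ := fun j => ENNReal.ofReal (2 * Real.exp 1 * ρ ^ (∑ k, j k))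
    with hFdef
  have hsumf : Summable (fun j : Fin m → ℕ => 2 * Real.exp 1 * ρ ^ (∑ k, j k)) :=
    (aux_summable_pow' m hρ0 hρ1).mul_left _
  have hFtop : ∑' j, F j ≠ ⊤ := by
    rw [hFdef, ← ENNReal.ofReal_tsum_of_nonneg (fun j => by positivity) hsumf]
    exact ENNReal.ofReal_ne_top
  obtain ⟨S, hS⟩ :=
    ((ENNReal.tendsto_tsum_compl_atTop_zero hFtop).eventually_lt_const
      (show (0:ℝ≥0∞) < 1/2 by norm_num)).exists
  -- the two blocks
  set A : Set Ω := ⋂ j ∈ S, E j with hAdef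
  set B : Set Ω := ⋂ j ∈ (↑S : Set (Fin m → ℕ))ᶜ, E j with hBdef
  have hblock :
      Indep (⨆ j ∈ (↑S : Set (Fin m → ℕ)), MeasurableSpace.comap (β j) inferInstance)
        (⨆ j ∈ (↑S : Set (Fin m → ℕ))ᶜ, MeasurableSpace.comap (β j) inferInstance) μ :=
    indep_iSup_of_disjoint (fun j => (hβmeas j).comap_le) hindepβ.iIndep disjoint_compl_right
  have hAmem : MeasurableSet[⨆ j ∈ (↑S : Set (Fin m → ℕ)),
      MeasurableSpace.comap (β j) inferInstance] A := by
    refine MeasurableSet.biInter S.countable_toSet (fun j hj => ?_)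
    exact (le_iSup₂ (f := fun (j : Fin m → ℕ) (_ : j ∈ (↑S : Set (Fin m → ℕ))) =>
      MeasurableSpace.comap (β j) inferInstance) j hj) _ (hEcomap j)
  have hBmem : MeasurableSet[⨆ j ∈ (↑S : Set (Fin m → ℕ))ᶜ,
      MeasurableSpace.comap (β j) inferInstance] B := by
    refine MeasurableSet.biInter (Set.to_countable _) (fun j hj => ?_)
    exact (le_iSup₂ (f := fun (j : Fin m → ℕ) (_ : j ∈ (↑S : Set (Fin m → ℕ))ᶜ) =>
      MeasurableSpace.comap (β j) inferInstance) j hj) _ (hEcomap j)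
  have hmul : μ (A ∩ B) = μ A * μ B := ((Indep_iff _ _ _).mp hblock) A B hAmem hBmem
  -- positivity of μ A
  have hA : μ A ≠ 0 := by
    have hprod : μ A = ∏ j ∈ S, μ (E j) :=
      hindepβ.meas_biInter (fun j _ => hEcomap j)
    rw [hprod]
    refine ne_of_gt (CanonicallyOrderedAdd.prod_pos.mpr (fun j _ => ?_))
    rw [hEμ]
    exact aux_gauss_pos' (hc0 j)
  -- positivity of μ B
  have hB : μ B ≠ 0 := by
    have hBeq : B = (⋃ j ∈ (↑S : Set (Fin m → ℕ))ᶜ, (E j)ᶜ)ᶜ := by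
      rw [hBdef, Set.compl_iUnion₂]
      simp only [compl_compl]
    have hUmeas : MeasurableSet (⋃ j ∈ (↑S : Set (Fin m → ℕ))ᶜ, (E j)ᶜ) :=
      MeasurableSet.biUnion (Set.to_countable _) (fun j _ => (hEmeas j).compl)
    have hUle : μ (⋃ j ∈ (↑S : Set (Fin m → ℕ))ᶜ, (E j)ᶜ) < 1 := by
      refine lt_of_le_of_lt (measure_biUnion_le μ (Set.to_countable _) _) ?_
      refine lt_of_le_of_lt (ENNReal.tsum_le_tsum (fun b => hEcμ b.1)) ?_
      exact lt_trans hS (by norm_num)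
    rw [hBeq, measure_compl hUmeas (measure_ne_top μ _), measure_univ]
    intro hcon
    rw [tsub_eq_zero_iff_le] at hcon
    exact absurd hcon (not_le.mpr hUle)
  -- conclusion
  have htarget : μ {ω | ∀ j : Fin m → ℕ, |α j ω| < c j} = μ (⋂ j, E j) := by
    refine measure_congr ?_
    rw [Filter.eventuallyEq_set]
    filter_upwards [hall] with ω hω
    simp only [Set.mem_setOf_eq, Set.mem_iInter, hEdef, Set.mem_preimage, Set.mem_Ioo]
    constructor
    · intro h j
      rw [← hω j]
      exact abs_lt.mp (h j)
    · intro h j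
      rw [abs_lt, hω j]
      exact h j
  have hsplit : (⋂ j, E j) = A ∩ B := by
    ext ω
    simp only [Set.mem_iInter, hAdef, hBdef, Set.mem_inter_iff, Set.mem_compl_iff,
      Finset.mem_coe]
    constructor
    · intro h
      exact ⟨fun j _ => h j, fun j _ => h j⟩
    · rintro ⟨h1, h2⟩ j
      by_cases hj : j ∈ S
      · exact h1 j hj
      · exact h2 j hj
  show 0 < μ {ω | ∀ j : Fin m → ℕ, |α j ω| < c j}
  rw [htarget, hsplit, hmul]
  exact ENNReal.mul_pos hA hB
end

section
/- For m ≥ 1 there is a constant E_m such that Σ_{j∈ℕᵐ, |j|>24mr²} 2^{|j|/2} · r^{|j|} / √(j!) ≤ E_m for all r ≥ 1, where |j| = j₁+⋯+jₘ. In particular the tail sum Σ_{|j|>24mr²} 2^{|j|/2} (|j|/(24m))^{|j|/2} / √(j!) is bounded by a constant depending only on m. -/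
open Real
open Finset

-- multinomial bound
lemma my_multinomial_le (m : ℕ) (j : Fin m → ℕ) :
    Nat.multinomial Finset.univ j ≤ m ^ (∑ k, j k) := by
  have h := Finset.sum_pow_eq_sum_piAntidiag (Finset.univ : Finset (Fin m))
    (fun _ => (1 : ℕ)) (∑ k, j k)
  simp only [sum_const, card_univ, Fintype.card_fin, smul_eq_mul, mul_one, one_pow,
    prod_const_one] at h
  rw [h]
  refine Finset.single_le_sum (f := fun k => Nat.multinomial Finset.univ k)
    (fun _ _ => Nat.zero_le _) ?_
  rw [Finset.mem_piAntidiag]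
  exact ⟨rfl, fun i _ => Finset.mem_univ i⟩

-- factorial bound on product
lemma my_fact_le (m : ℕ) (j : Fin m → ℕ) :
    (∑ k, j k).factorial ≤ m ^ (∑ k, j k) * ∏ k, (j k).factorial := by
  calc (∑ k, j k).factorial = (∏ k, (j k).factorial) * Nat.multinomial Finset.univ j :=
        (Nat.multinomial_spec _ _).symm
    _ ≤ (∏ k, (j k).factorial) * m ^ (∑ k, j k) :=
        Nat.mul_le_mul_left _ (my_multinomial_le m j)
    _ = _ := Nat.mul_comm _ _

-- Stirling-type bound
lemma my_pow_le (n : ℕ) : (n : ℝ) ^ n ≤ Real.exp 1 ^ n * n.factorial := by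
  have h := Real.sum_le_exp_of_nonneg (x := (n : ℝ)) (Nat.cast_nonneg n) (n + 1)
  have h2 : (n : ℝ) ^ n / n.factorial ≤ Real.exp n := by
    refine le_trans ?_ h
    refine Finset.single_le_sum (f := fun i => (n : ℝ) ^ i / i.factorial) ?_ ?_
    · intro i _; positivity
    · exact Finset.self_mem_range_succ n
  rw [div_le_iff₀ (by positivity : (0:ℝ) < n.factorial)] at h2
  calc (n:ℝ)^n ≤ Real.exp n * n.factorial := h2
    _ = Real.exp 1 ^ n * n.factorial := by
        rw [← Real.exp_nat_mul]; norm_num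

lemma my_sqrt_pow (x : ℝ) (hx : 0 ≤ x) (n : ℕ) : Real.sqrt x ^ n = Real.sqrt (x ^ n) := by
  rw [Real.sqrt_eq_rpow, Real.sqrt_eq_rpow, ← Real.rpow_natCast (x ^ (1/2 : ℝ)),
    ← Real.rpow_natCast x, ← Real.rpow_mul hx, ← Real.rpow_mul hx, mul_comm]

lemma my_rpow_half (x : ℝ) (hx : 0 ≤ x) (n : ℕ) :
    x ^ ((n : ℝ) / 2) = Real.sqrt x ^ n := by
  rw [Real.sqrt_eq_rpow, ← Real.rpow_natCast (x ^ (1/2 : ℝ)), ← Real.rpow_mul hx]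
  congr 1; ring

-- summability of the geometric majorant
lemma my_summable (q : ℝ) (hq0 : 0 ≤ q) (hq1 : q < 1) :
    ∀ m : ℕ, Summable (fun j : Fin m → ℕ => q ^ (∑ k, j k)) := by
  intro m
  induction m with
  | zero => exact Summable.of_finite
  | succ m ih =>
      rw [← Equiv.summable_iff (Fin.consEquiv (fun _ : Fin (m + 1) => ℕ))]
      refine Summable.congr
        ((summable_geometric_of_lt_one hq0 hq1).mul_of_nonneg ih
          (fun _ => by positivity) (fun _ => by positivity)) ?_
      intro p
      show q ^ p.1 * q ^ (∑ k, p.2 k) = q ^ (∑ k, (Fin.cons p.1 p.2 : Fin (m+1) → ℕ) k)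
      simp [Fin.sum_univ_succ, pow_add]

-- key per-term bound
lemma my_key (m : ℕ) (hm : 1 ≤ m) (j : Fin m → ℕ) :
    (2 : ℝ) ^ (((∑ k, j k : ℕ) : ℝ) / 2) *
      (((∑ k, j k : ℕ) : ℝ) / (24 * m)) ^ (((∑ k, j k : ℕ) : ℝ) / 2) /
      Real.sqrt (∏ k, Nat.factorial (j k)) ≤
    Real.sqrt (Real.exp 1 / 12) ^ (∑ k, j k) := by
  set n := ∑ k, j k with hn
  have hm0 : (0:ℝ) < m := by exact_mod_cast hm
  have hP0 : (0:ℝ) < ∏ k, ((j k).factorial : ℝ) := by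
    refine Finset.prod_pos fun k _ => ?_
    exact_mod_cast Nat.factorial_pos _
  have hsP : 0 < Real.sqrt (∏ k, ((j k).factorial : ℝ)) := Real.sqrt_pos.mpr hP0
  rw [my_rpow_half 2 (by norm_num) n, my_rpow_half _ (by positivity) n,
    div_le_iff₀ hsP, ← mul_pow, ← Real.sqrt_mul (by norm_num)]
  have hbase : (2 : ℝ) * ((n : ℝ) / (24 * m)) = (n : ℝ) / (12 * m) := by
    field_simp; ring
  rw [hbase]
  -- core inequality after squaring
  have core : ((n : ℝ) / (12 * m)) ^ n ≤
      (Real.exp 1 / 12) ^ n * (∏ k, ((j k).factorial : ℝ)) := by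
    rw [div_pow, div_le_iff₀ (by positivity : (0:ℝ) < (12 * m) ^ n)]
    have h1 : (n : ℝ) ^ n ≤ Real.exp 1 ^ n * (n.factorial : ℝ) := my_pow_le n
    have h2 : (n.factorial : ℝ) ≤ (m : ℝ) ^ n * (∏ k, ((j k).factorial : ℝ)) := by
      have h := my_fact_le m j
      rw [← hn] at h
      calc (n.factorial : ℝ) ≤ ((m ^ n * ∏ k, (j k).factorial : ℕ) : ℝ) := by exact_mod_cast h
        _ = (m : ℝ) ^ n * (∏ k, ((j k).factorial : ℝ)) := by push_cast; ring
    calc (n : ℝ) ^ n ≤ Real.exp 1 ^ n * (n.factorial : ℝ) := h1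
      _ ≤ Real.exp 1 ^ n * ((m : ℝ) ^ n * (∏ k, ((j k).factorial : ℝ))) :=
          mul_le_mul_of_nonneg_left h2 (by positivity)
      _ = (Real.exp 1 / 12) ^ n * (∏ k, ((j k).factorial : ℝ)) * (12 * m) ^ n := by
          rw [div_pow, mul_pow]
          field_simp
  calc Real.sqrt ((n : ℝ) / (12 * m)) ^ n = Real.sqrt (((n : ℝ) / (12 * m)) ^ n) :=
        my_sqrt_pow _ (by positivity) n
    _ ≤ Real.sqrt ((Real.exp 1 / 12) ^ n * (∏ k, ((j k).factorial : ℝ))) :=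
        Real.sqrt_le_sqrt core
    _ = Real.sqrt ((Real.exp 1 / 12) ^ n) * Real.sqrt (∏ k, Nat.factorial (j k)) := by
        rw [Real.sqrt_mul (by positivity)]
    _ = Real.sqrt (Real.exp 1 / 12) ^ n * Real.sqrt (∏ k, Nat.factorial (j k)) := by
        rw [my_sqrt_pow _ (by positivity)]

theorem tail_sum_bounded (m : ℕ) (hm : 1 ≤ m) :
    ∃ E : ℝ, ∀ r : ℝ, 1 ≤ r →
      (Summable (fun j : {j : Fin m → ℕ // (24 * m : ℝ) * r ^ 2 < ((∑ k, j k : ℕ) : ℝ)} =>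
          (2 : ℝ) ^ (((∑ k, j.1 k : ℕ) : ℝ) / 2) * r ^ (∑ k, j.1 k) /
            Real.sqrt (∏ k, Nat.factorial (j.1 k))) ∧
        (∑' j : {j : Fin m → ℕ // (24 * m : ℝ) * r ^ 2 < ((∑ k, j k : ℕ) : ℝ)},
            (2 : ℝ) ^ (((∑ k, j.1 k : ℕ) : ℝ) / 2) * r ^ (∑ k, j.1 k) /
              Real.sqrt (∏ k, Nat.factorial (j.1 k))) ≤ E) ∧
      (Summable (fun j : {j : Fin m → ℕ // (24 * m : ℝ) * r ^ 2 < ((∑ k, j k : ℕ) : ℝ)} =>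
          (2 : ℝ) ^ (((∑ k, j.1 k : ℕ) : ℝ) / 2) *
            (((∑ k, j.1 k : ℕ) : ℝ) / (24 * m)) ^ (((∑ k, j.1 k : ℕ) : ℝ) / 2) /
            Real.sqrt (∏ k, Nat.factorial (j.1 k))) ∧
        (∑' j : {j : Fin m → ℕ // (24 * m : ℝ) * r ^ 2 < ((∑ k, j k : ℕ) : ℝ)},
            (2 : ℝ) ^ (((∑ k, j.1 k : ℕ) : ℝ) / 2) *
              (((∑ k, j.1 k : ℕ) : ℝ) / (24 * m)) ^ (((∑ k, j.1 k : ℕ) : ℝ) / 2) /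
              Real.sqrt (∏ k, Nat.factorial (j.1 k))) ≤ E) := by
  set q : ℝ := Real.sqrt (Real.exp 1 / 12) with hq
  have hq0 : 0 ≤ q := Real.sqrt_nonneg _
  have hq1 : q < 1 := by
    rw [hq]
    have h : Real.exp 1 / 12 < 1 := by have := Real.exp_one_lt_d9; linarith
    calc Real.sqrt (Real.exp 1 / 12) < Real.sqrt 1 := Real.sqrt_lt_sqrt (by positivity) h
      _ = 1 := Real.sqrt_one
  have hS := my_summable q hq0 hq1 m
  have hm0 : (0:ℝ) < m := by exact_mod_cast hm
  refine ⟨∑' j : Fin m → ℕ, q ^ (∑ k, j k), fun r hr => ?_⟩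
  have hr0 : (0:ℝ) ≤ r := le_trans zero_le_one hr
  have hSsub : Summable
      (fun j : {j : Fin m → ℕ // (24 * m : ℝ) * r ^ 2 < ((∑ k, j k : ℕ) : ℝ)} =>
        q ^ (∑ k, j.1 k)) := hS.subtype _
  -- termwise bound: term2 ≤ q ^ n for all j
  have key2 := my_key m hm
  -- termwise bound: term1 ≤ term2 on the subtype
  have key1 : ∀ j : {j : Fin m → ℕ // (24 * m : ℝ) * r ^ 2 < ((∑ k, j k : ℕ) : ℝ)},
      (2 : ℝ) ^ (((∑ k, j.1 k : ℕ) : ℝ) / 2) * r ^ (∑ k, j.1 k) /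
          Real.sqrt (∏ k, Nat.factorial (j.1 k)) ≤
        (2 : ℝ) ^ (((∑ k, j.1 k : ℕ) : ℝ) / 2) *
          (((∑ k, j.1 k : ℕ) : ℝ) / (24 * m)) ^ (((∑ k, j.1 k : ℕ) : ℝ) / 2) /
          Real.sqrt (∏ k, Nat.factorial (j.1 k)) := by
    intro j
    set n := ∑ k, j.1 k with hn
    have hrsq : r ^ 2 < (n : ℝ) / (24 * m) := by
      rw [lt_div_iff₀ (by positivity)]
      have := j.2
      nlinarith
    have hrle : r ≤ Real.sqrt ((n : ℝ) / (24 * m)) := by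
      have : r = Real.sqrt (r ^ 2) := (Real.sqrt_sq hr0).symm
      rw [this]
      exact Real.sqrt_le_sqrt hrsq.le
    have hpow : r ^ n ≤ ((n : ℝ) / (24 * m)) ^ ((n : ℝ) / 2) := by
      rw [my_rpow_half _ (by positivity) n]
      exact pow_le_pow_left₀ hr0 hrle n
    gcongr
  have nonneg1 : ∀ j : {j : Fin m → ℕ // (24 * m : ℝ) * r ^ 2 < ((∑ k, j k : ℕ) : ℝ)},
      0 ≤ (2 : ℝ) ^ (((∑ k, j.1 k : ℕ) : ℝ) / 2) * r ^ (∑ k, j.1 k) /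
          Real.sqrt (∏ k, Nat.factorial (j.1 k)) := by
    intro j; positivity
  have nonneg2 : ∀ j : {j : Fin m → ℕ // (24 * m : ℝ) * r ^ 2 < ((∑ k, j k : ℕ) : ℝ)},
      0 ≤ (2 : ℝ) ^ (((∑ k, j.1 k : ℕ) : ℝ) / 2) *
          (((∑ k, j.1 k : ℕ) : ℝ) / (24 * m)) ^ (((∑ k, j.1 k : ℕ) : ℝ) / 2) /
          Real.sqrt (∏ k, Nat.factorial (j.1 k)) := by
    intro j
    have : (0:ℝ) ≤ (((∑ k, j.1 k : ℕ) : ℝ) / (24 * m)) ^ (((∑ k, j.1 k : ℕ) : ℝ) / 2) :=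
      Real.rpow_nonneg (by positivity) _
    positivity
  have bound2 : ∀ j : {j : Fin m → ℕ // (24 * m : ℝ) * r ^ 2 < ((∑ k, j k : ℕ) : ℝ)},
      (2 : ℝ) ^ (((∑ k, j.1 k : ℕ) : ℝ) / 2) *
          (((∑ k, j.1 k : ℕ) : ℝ) / (24 * m)) ^ (((∑ k, j.1 k : ℕ) : ℝ) / 2) /
          Real.sqrt (∏ k, Nat.factorial (j.1 k)) ≤ q ^ (∑ k, j.1 k) :=
    fun j => key2 j.1
  have bound1 : ∀ j : {j : Fin m → ℕ // (24 * m : ℝ) * r ^ 2 < ((∑ k, j k : ℕ) : ℝ)},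
      (2 : ℝ) ^ (((∑ k, j.1 k : ℕ) : ℝ) / 2) * r ^ (∑ k, j.1 k) /
          Real.sqrt (∏ k, Nat.factorial (j.1 k)) ≤ q ^ (∑ k, j.1 k) :=
    fun j => le_trans (key1 j) (bound2 j)
  have sum1 : Summable (fun j : {j : Fin m → ℕ // (24 * m : ℝ) * r ^ 2 < ((∑ k, j k : ℕ) : ℝ)} =>
      (2 : ℝ) ^ (((∑ k, j.1 k : ℕ) : ℝ) / 2) * r ^ (∑ k, j.1 k) /
        Real.sqrt (∏ k, Nat.factorial (j.1 k))) :=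
    Summable.of_nonneg_of_le nonneg1 bound1 hSsub
  have sum2 : Summable (fun j : {j : Fin m → ℕ // (24 * m : ℝ) * r ^ 2 < ((∑ k, j k : ℕ) : ℝ)} =>
      (2 : ℝ) ^ (((∑ k, j.1 k : ℕ) : ℝ) / 2) *
        (((∑ k, j.1 k : ℕ) : ℝ) / (24 * m)) ^ (((∑ k, j.1 k : ℕ) : ℝ) / 2) /
        Real.sqrt (∏ k, Nat.factorial (j.1 k))) :=
    Summable.of_nonneg_of_le nonneg2 bound2 hSsub
  refine ⟨⟨sum1, ?_⟩, sum2, ?_⟩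
  · exact sum1.tsum_le_tsum_of_inj Subtype.val Subtype.val_injective
      (fun c _ => by positivity) bound1 hS
  · exact sum2.tsum_le_tsum_of_inj Subtype.val Subtype.val_injective
      (fun c _ => by positivity) bound2 hS
end
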